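/- arXiv:2102.06810 — 9 statements merged into one kernel-verified Lean document; each statement's English description precedes it below -/
import Mathlib

section
/- Let n1, n2 be positive natural numbers, let X, X' be real n1×n1 matrices, let α_p > 0 and η be real constants, and let W : ℝ → Mat(n2×n1, ℝ), W_p : ℝ → Mat(n2×n2, ℝ), W_a : ℝ → Mat(n2×n1, ℝ) be differentiable matrix-valued functions satisfying for all t the differential equations Ẇ_p(t) = α_p(−W_p(t)W(t)(X+X') + W_a(t)X)W(t)ᵀ − η W_p(t) and Ẇ(t) = W_p(t)ᵀ(−W_p(t)W(t)(X+X') + W_a(t)X) − η W(t). Then for all t, W(t)W(t)ᵀ − α_p⁻¹ W_p(t)ᵀW_p(t) = e^{−2ηt}·(W(0)W(0)ᵀ − α_p⁻¹ W_p(0)ᵀW_p(0)); in particular the difference W(t)W(t)ᵀ − α_p⁻¹ W_p(t)ᵀW_p(t) decays as e^{−2ηt} independently of the evolution of W_a. -/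
/-!
STATEMENT 0: Balancing invariance of the BYOL/SimSiam gradient flow
(Theorem 1 of "Understanding Self-Supervised Learning Dynamics without
Contrastive Pairs").
-/

open Matrix
attribute [local instance] Matrix.frobeniusNormedAddCommGroup Matrix.frobeniusNormedSpace

/-- Matrix multiplication as a continuous bilinear map (curried). -/
noncomputable def mulCLM (a b c : ℕ) :
    Matrix (Fin a) (Fin b) ℝ →L[ℝ] Matrix (Fin b) (Fin c) ℝ →L[ℝ] Matrix (Fin a) (Fin c) ℝ :=
  LinearMap.toContinuousLinearMap <|
    { toFun := fun A => LinearMap.toContinuousLinearMap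
        { toFun := fun B => A * B
          map_add' := fun B C => Matrix.mul_add A B C
          map_smul' := fun r B => (Matrix.mul_smul A r B) }
      map_add' := by intros; ext; simp [Matrix.add_mul]
      map_smul' := by intros; ext; simp [Matrix.smul_mul] }

theorem hasDerivAt_matmul {a b c : ℕ}
    {f : ℝ → Matrix (Fin a) (Fin b) ℝ} {g : ℝ → Matrix (Fin b) (Fin c) ℝ}
    {f' : Matrix (Fin a) (Fin b) ℝ} {g' : Matrix (Fin b) (Fin c) ℝ} {t : ℝ}
    (hf : HasDerivAt f f' t) (hg : HasDerivAt g g' t) :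
    HasDerivAt (fun s => f s * g s) (f' * g t + f t * g') t := by
  have h := (mulCLM a b c).isBoundedBilinearMap.hasFDerivAt (f t, g t)
  have h2 := h.comp_hasDerivAt t (hf.prodMk hg)
  refine HasDerivAt.congr_deriv h2 ?_
  rw [add_comm]
  simp only [IsBoundedBilinearMap.deriv_apply, mulCLM, LinearMap.coe_toContinuousLinearMap',
    LinearMap.coe_mk, AddHom.coe_mk]
  rfl

/-- Transpose as a continuous linear map. -/
noncomputable def transposeCLM (a b : ℕ) :
    Matrix (Fin a) (Fin b) ℝ →L[ℝ] Matrix (Fin b) (Fin a) ℝ :=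
  LinearMap.toContinuousLinearMap
    { toFun := fun A => Aᵀ
      map_add' := fun A B => Matrix.transpose_add A B
      map_smul' := fun r A => Matrix.transpose_smul r A }

theorem hasDerivAt_transpose {a b : ℕ}
    {f : ℝ → Matrix (Fin a) (Fin b) ℝ} {f' : Matrix (Fin a) (Fin b) ℝ} {t : ℝ}
    (hf : HasDerivAt f f' t) :
    HasDerivAt (fun s => (f s)ᵀ) f'ᵀ t := by
  have h := ((transposeCLM a b).hasFDerivAt (x := f t)).comp_hasDerivAt t hf
  exact h

theorem byol_weight_balance_invariance
    (n1 n2 : ℕ) (hn1 : 0 < n1) (hn2 : 0 < n2)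
    (X X' : Matrix (Fin n1) (Fin n1) ℝ)
    (αp η : ℝ) (hαp : 0 < αp)
    (W Wa : ℝ → Matrix (Fin n2) (Fin n1) ℝ)
    (Wp : ℝ → Matrix (Fin n2) (Fin n2) ℝ)
    (hWp : ∀ t : ℝ, HasDerivAt Wp
      (αp • ((-(Wp t * W t * (X + X')) + Wa t * X) * (W t)ᵀ) - η • Wp t) t)
    (hW : ∀ t : ℝ, HasDerivAt W
      ((Wp t)ᵀ * (-(Wp t * W t * (X + X')) + Wa t * X) - η • W t) t) :
    ∀ t : ℝ,
      W t * (W t)ᵀ - αp⁻¹ • ((Wp t)ᵀ * Wp t)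
        = Real.exp (-2 * η * t) • (W 0 * (W 0)ᵀ - αp⁻¹ • ((Wp 0)ᵀ * Wp 0)) := by
  set A : ℝ → Matrix (Fin n2) (Fin n2) ℝ :=
    fun t => W t * (W t)ᵀ - αp⁻¹ • ((Wp t)ᵀ * Wp t) with hA
  -- A satisfies A' = (-2η) • A
  have hA' : ∀ t : ℝ, HasDerivAt A ((-2 * η) • A t) t := by
    intro t
    set M : Matrix (Fin n2) (Fin n1) ℝ := -(Wp t * W t * (X + X')) + Wa t * X with hM
    have hWt := hW t
    have hWpt := hWp t
    have h1 : HasDerivAt (fun s => W s * (W s)ᵀ)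
        (((Wp t)ᵀ * M - η • W t) * (W t)ᵀ + W t * ((Wp t)ᵀ * M - η • W t)ᵀ) t :=
      hasDerivAt_matmul hWt (hasDerivAt_transpose hWt)
    have h2 : HasDerivAt (fun s => (Wp s)ᵀ * Wp s)
        ((αp • (M * (W t)ᵀ) - η • Wp t)ᵀ * Wp t + (Wp t)ᵀ * (αp • (M * (W t)ᵀ) - η • Wp t)) t :=
      hasDerivAt_matmul (hasDerivAt_transpose hWpt) hWpt
    have h3 := h1.sub (h2.const_smul αp⁻¹)
    refine HasDerivAt.congr_deriv h3 ?_
    have hαp' : αp⁻¹ * αp = 1 := inv_mul_cancel₀ (ne_of_gt hαp)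
    simp only [hA, Matrix.transpose_sub, Matrix.transpose_smul, Matrix.transpose_mul,
      Matrix.transpose_transpose, Matrix.sub_mul, Matrix.mul_sub, Matrix.smul_mul,
      Matrix.mul_smul, smul_sub, smul_add, smul_smul, hαp', one_smul, Matrix.mul_assoc]
    module
  -- G t := exp(2ηt) • A t has zero derivative
  set G : ℝ → Matrix (Fin n2) (Fin n2) ℝ := fun t => Real.exp (2 * η * t) • A t with hG
  have hG' : ∀ t : ℝ, HasDerivAt G 0 t := by
    intro t
    have he : HasDerivAt (fun s : ℝ => Real.exp (2 * η * s)) (2 * η * Real.exp (2 * η * t)) t := by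
      have := (Real.hasDerivAt_exp (2 * η * t)).comp t
        ((hasDerivAt_id t).const_mul (2 * η))
      simpa [Function.comp_def, mul_comm] using this
    have h := he.smul (hA' t)
    refine h.congr_deriv ?_
    rw [smul_smul, ← add_smul]
    have hc : Real.exp (2 * η * t) * (-2 * η) + 2 * η * Real.exp (2 * η * t) = 0 := by ring
    rw [hc, zero_smul]
  have hconst : ∀ t : ℝ, G t = G 0 := by
    intro t
    have hdiff : Differentiable ℝ G := fun x => (hG' x).differentiableAt
    have hfd : ∀ x : ℝ, fderiv ℝ G x = 0 := by
      intro x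
      rw [(hG' x).hasFDerivAt.fderiv]
      ext y
      simp
    exact is_const_of_fderiv_eq_zero hdiff hfd t 0
  intro t
  have h := hconst t
  simp only [hG, mul_zero, Real.exp_zero, one_smul] at h
  have : Real.exp (-2 * η * t) • (Real.exp (2 * η * t) • A t) = Real.exp (-2 * η * t) • A 0 := by
    rw [h]
  rw [smul_smul, ← Real.exp_add] at this
  have he : -2 * η * t + 2 * η * t = 0 := by ring
  rw [he, Real.exp_zero, one_smul] at this
  exact this
end

section
/- Let n1, n2 be positive natural numbers, let X, X' be real symmetric positive semidefinite n1×n1 matrices, let η ≥ 0 and λ₀ > 0, let W_p : ℝ → Mat(n2×n2, ℝ) be any matrix-valued function, and let W : ℝ → Mat(n2×n1, ℝ) be differentiable satisfying for all t ≥ 0 the equation Ẇ(t) = −(W_p(t)ᵀW_p(t) + I)W(t)X' − (W_p(t) − I)ᵀ(W_p(t) − I)W(t)X − η W(t). Assume that for all t ≥ 0 and all V ∈ Mat(n2×n1, ℝ), tr(Vᵀ((W_p(t)ᵀW_p(t) + I)V X' + (W_p(t) − I)ᵀ(W_p(t) − I)V X)) + η‖V‖_F² ≥ λ₀‖V‖_F².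 Then ‖W(t)‖_F ≤ e^{−λ₀ t}‖W(0)‖_F for all t ≥ 0, so W(t) → 0. -/
/-!
STATEMENT 2: Theorem 2 of the paper (no-stop-gradient collapse). In the SimSiam
setting without stop-gradient, the online weight W evolves by a linear ODE whose
coefficient operator is uniformly positive definite (as a quadratic form on
matrices, measured in the Frobenius inner product `tr(VᵀV) = ‖V‖_F²`), hence
‖W(t)‖_F ≤ e^{−λ₀ t}‖W(0)‖_F and W(t) → 0.
-/

open Matrix

attribute [local instance] Matrix.frobeniusNormedAddCommGroup Matrix.frobeniusNormedSpace

theorem no_stop_gradient_collapse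
    (n1 n2 : ℕ) (hn1 : 0 < n1) (hn2 : 0 < n2)
    (X X' : Matrix (Fin n1) (Fin n1) ℝ) (hX : X.PosSemidef) (hX' : X'.PosSemidef)
    (η lam : ℝ) (hη : 0 ≤ η) (hlam : 0 < lam)
    (Wp : ℝ → Matrix (Fin n2) (Fin n2) ℝ)
    (W : ℝ → Matrix (Fin n2) (Fin n1) ℝ)
    (hW : ∀ t : ℝ, 0 ≤ t → HasDerivAt W
      (-(((Wp t)ᵀ * Wp t + 1) * W t * X')
        - ((Wp t - 1)ᵀ * (Wp t - 1)) * W t * X - η • W t) t)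
    (hbound : ∀ t : ℝ, 0 ≤ t → ∀ V : Matrix (Fin n2) (Fin n1) ℝ,
      lam * Matrix.trace (Vᵀ * V) ≤
        Matrix.trace (Vᵀ * (((Wp t)ᵀ * Wp t + 1) * V * X'
            + ((Wp t - 1)ᵀ * (Wp t - 1)) * V * X))
          + η * Matrix.trace (Vᵀ * V)) :
    (∀ t : ℝ, 0 ≤ t →
        Real.sqrt (Matrix.trace ((W t)ᵀ * W t)) ≤
          Real.exp (-lam * t) * Real.sqrt (Matrix.trace ((W 0)ᵀ * W 0)))
      ∧ Filter.Tendsto W Filter.atTop (nhds 0) := by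
  classical
  -- derivative matrix
  set Dm : ℝ → Matrix (Fin n2) (Fin n1) ℝ := fun t =>
    -(((Wp t)ᵀ * Wp t + 1) * W t * X')
      - ((Wp t - 1)ᵀ * (Wp t - 1)) * W t * X - η • W t with hDm
  set g : ℝ → ℝ := fun t => Matrix.trace ((W t)ᵀ * W t) with hg
  have trace_eq : ∀ (A B : Matrix (Fin n2) (Fin n1) ℝ),
      Matrix.trace (Aᵀ * B) = ∑ j, ∑ i, A i j * B i j := by
    intro A B
    simp [Matrix.trace, Matrix.diag, Matrix.mul_apply, Matrix.transpose_apply]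
  have g_nonneg : ∀ t, 0 ≤ g t := by
    intro t
    rw [hg]
    simp only
    rw [trace_eq]
    apply Finset.sum_nonneg; intro j _
    apply Finset.sum_nonneg; intro i _
    exact mul_self_nonneg _
  -- entrywise derivative
  have hentry : ∀ (t : ℝ), 0 ≤ t → ∀ (i : Fin n2) (j : Fin n1),
      HasDerivAt (fun s => W s i j) (Dm t i j) t := by
    intro t ht i j
    let φ : Matrix (Fin n2) (Fin n1) ℝ →L[ℝ] ℝ :=
      LinearMap.toContinuousLinearMap
        { toFun := fun M => M i j, map_add' := fun _ _ => rfl, map_smul' := fun _ _ => rfl }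
    exact φ.hasFDerivAt.comp_hasDerivAt t (hW t ht)
  -- derivative of g
  have hgderiv : ∀ t : ℝ, 0 ≤ t →
      HasDerivAt g (2 * Matrix.trace ((W t)ᵀ * Dm t)) t := by
    intro t ht
    have h1 : HasDerivAt (fun s => ∑ j, ∑ i, W s i j * W s i j)
        (∑ j : Fin n1, ∑ i : Fin n2,
          (Dm t i j * W t i j + W t i j * Dm t i j)) t := by
      apply HasDerivAt.fun_sum; intro j _
      apply HasDerivAt.fun_sum; intro i _
      exact (hentry t ht i j).mul (hentry t ht i j)
    have hfun : g = fun s => ∑ j, ∑ i, W s i j * W s i j := by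
      funext s; rw [hg]; exact trace_eq _ _
    have hval : (2 : ℝ) * Matrix.trace ((W t)ᵀ * Dm t)
        = ∑ j : Fin n1, ∑ i : Fin n2, (Dm t i j * W t i j + W t i j * Dm t i j) := by
      rw [trace_eq, Finset.mul_sum]
      congr 1; funext j
      rw [Finset.mul_sum]
      congr 1; funext i
      ring
    rw [hfun, hval]
    exact h1
  -- the key trace inequality
  have htr : ∀ t : ℝ, 0 ≤ t →
      Matrix.trace ((W t)ᵀ * Dm t) ≤ -lam * g t := by
    intro t ht
    have hb := hbound t ht (W t)
    have hexp : Matrix.trace ((W t)ᵀ * Dm t)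
        = -(Matrix.trace ((W t)ᵀ * (((Wp t)ᵀ * Wp t + 1) * W t * X'
            + ((Wp t - 1)ᵀ * (Wp t - 1)) * W t * X))
          + η * Matrix.trace ((W t)ᵀ * W t)) := by
      rw [hDm]
      simp only [Matrix.mul_sub, Matrix.mul_add, Matrix.mul_neg, Matrix.mul_smul,
        Matrix.trace_sub, Matrix.trace_add, Matrix.trace_neg, Matrix.trace_smul]
      simp [smul_eq_mul]
      ring
    rw [hexp, hg]
    simp only [neg_mul]
    linarith
  -- exponential decay of g
  have key : ∀ t : ℝ, 0 ≤ t → g t ≤ Real.exp (-(2 * lam) * t) * g 0 := by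
    intro t ht
    set h : ℝ → ℝ := fun s => Real.exp (2 * lam * s) * g s with hh
    have hderiv : ∀ s : ℝ, 0 ≤ s → HasDerivAt h
        (Real.exp (2 * lam * s) * (2 * lam) * g s
          + Real.exp (2 * lam * s) * (2 * Matrix.trace ((W s)ᵀ * Dm s))) s := by
      intro s hs
      have he : HasDerivAt (fun u => Real.exp (2 * lam * u))
          (Real.exp (2 * lam * s) * (2 * lam)) s := by
        have := ((hasDerivAt_id s).const_mul (2 * lam)).exp
        simpa [mul_one] using this
      exact he.mul (hgderiv s hs)
    have anti : AntitoneOn h (Set.Ici (0 : ℝ)) := by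
      apply antitoneOn_of_deriv_nonpos (convex_Ici 0)
      · intro s hs
        exact (hderiv s hs).continuousAt.continuousWithinAt
      · intro s hs
        rw [interior_Ici] at hs
        exact (hderiv s (le_of_lt hs)).differentiableAt.differentiableWithinAt
      · intro s hs
        rw [interior_Ici] at hs
        rw [(hderiv s hs.le).deriv]
        have h1 := htr s hs.le
        have h2 : (0 : ℝ) < Real.exp (2 * lam * s) := Real.exp_pos _
        nlinarith [g_nonneg s]
    have h0 : h t ≤ h 0 := anti Set.self_mem_Ici ht ht
    have h0' : h 0 = g 0 := by simp [hh]
    rw [h0'] at h0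
    -- h t = exp(2 lam t) * g t ≤ g 0
    have hE : (0 : ℝ) < Real.exp (2 * lam * t) := Real.exp_pos _
    have : g t ≤ g 0 / Real.exp (2 * lam * t) := by
      rw [le_div_iff₀ hE]
      calc g t * Real.exp (2 * lam * t) = h t := by rw [hh]; ring
        _ ≤ g 0 := h0
    calc g t ≤ g 0 / Real.exp (2 * lam * t) := this
      _ = Real.exp (-(2 * lam) * t) * g 0 := by
          rw [neg_mul, Real.exp_neg, div_eq_mul_inv, mul_comm]
  -- sqrt version
  have sqrt_exp : ∀ u : ℝ, Real.sqrt (Real.exp (-(2 * lam) * u)) = Real.exp (-lam * u) := by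
    intro u
    have : (-(2 * lam) * u) = (-lam * u) + (-lam * u) := by ring
    rw [this, Real.exp_add, Real.sqrt_mul_self (Real.exp_nonneg _)]
  have main : ∀ t : ℝ, 0 ≤ t →
      Real.sqrt (g t) ≤ Real.exp (-lam * t) * Real.sqrt (g 0) := by
    intro t ht
    calc Real.sqrt (g t) ≤ Real.sqrt (Real.exp (-(2 * lam) * t) * g 0) :=
          Real.sqrt_le_sqrt (key t ht)
      _ = Real.exp (-lam * t) * Real.sqrt (g 0) := by
          rw [Real.sqrt_mul (Real.exp_nonneg _), sqrt_exp]
  refine ⟨main, ?_⟩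
  -- norm equals sqrt of g
  have hnorm : ∀ t : ℝ, ‖W t‖ = Real.sqrt (g t) := by
    intro t
    rw [Matrix.frobenius_norm_def, hg]
    simp only
    rw [trace_eq, Real.sqrt_eq_rpow]
    congr 1
    rw [Finset.sum_comm]
    congr 1; funext i
    congr 1; funext j
    rw [show ((2:ℝ)) = ((2:ℕ):ℝ) by norm_num, Real.rpow_natCast, Real.norm_eq_abs,
      sq_abs, sq]
  refine tendsto_zero_iff_norm_tendsto_zero.mpr ?_
  have htend : Filter.Tendsto (fun t : ℝ => Real.exp (-lam * t) * Real.sqrt (g 0))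
      Filter.atTop (nhds 0) := by
    have h1 : Filter.Tendsto (fun t : ℝ => -lam * t) Filter.atTop Filter.atBot := by
      apply Filter.Tendsto.const_mul_atTop_of_neg (neg_neg_iff_pos.mpr hlam) Filter.tendsto_id
    have h2 : Filter.Tendsto (fun t : ℝ => Real.exp (-lam * t)) Filter.atTop (nhds 0) :=
      Real.tendsto_exp_atBot.comp h1
    simpa using h2.mul_const (Real.sqrt (g 0))
  apply squeeze_zero' (Filter.Eventually.of_forall fun t => norm_nonneg _) ?_ htend
  filter_upwards [Filter.eventually_ge_atTop (0:ℝ)] with t ht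
  rw [hnorm]
  exact main t ht
end

section
/- Let n1, n2 be positive natural numbers, let X' be a real symmetric positive semidefinite n1×n1 matrix, let η > 0, and let W : ℝ → Mat(n2×n1, ℝ) be differentiable satisfying Ẇ(t) = −W(t)(X' + ηI) for all t ≥ 0. Then ‖W(t)‖_F ≤ e^{−η t}‖W(0)‖_F for all t ≥ 0, so W(t) → 0. -/
/-!
STATEMENT 3: Remark after Theorem 2 of the paper. In the SimSiam setting with
the predictor removed (W_p = I), the stop-gradient dynamics Ẇ = −W(X' + ηI)
makes the online weight W collapse to zero:
‖W(t)‖_F ≤ e^{−η t}‖W(0)‖_F (Frobenius norm expressed as √(tr(WᵀW))).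
-/

open Matrix

attribute [local instance] Matrix.frobeniusNormedAddCommGroup Matrix.frobeniusNormedSpace

lemma trace_transpose_mul_self' {m n : ℕ} (A : Matrix (Fin m) (Fin n) ℝ) :
    Matrix.trace (Aᵀ * A) = ∑ i, ∑ j, (A i j) ^ 2 := by
  simp only [Matrix.trace, Matrix.mul_apply, Matrix.diag, Matrix.transpose_apply, sq,
    Finset.sum_comm (γ := Fin n)]

lemma sum_mul_eq_trace' {m n : ℕ} (A B : Matrix (Fin m) (Fin n) ℝ) :
    ∑ i, ∑ j, A i j * B i j = Matrix.trace (Aᵀ * B) := by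
  simp only [Matrix.trace, Matrix.mul_apply, Matrix.diag, Matrix.transpose_apply,
    Finset.sum_comm (γ := Fin n)]

lemma trace_transpose_mul_self_nonneg' {m n : ℕ} (A : Matrix (Fin m) (Fin n) ℝ) :
    0 ≤ Matrix.trace (Aᵀ * A) := by
  rw [trace_transpose_mul_self']
  positivity

lemma trace_psd_nonneg' {m n : ℕ} (A : Matrix (Fin m) (Fin n) ℝ)
    (X : Matrix (Fin n) (Fin n) ℝ) (hX : X.PosSemidef) :
    0 ≤ Matrix.trace (Aᵀ * A * X) := by
  open scoped MatrixOrder in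
  set S := CFC.sqrt X with hS
  have hsq : S * S = X := by have := CFC.sq_sqrt X hX.nonneg; rwa [pow_two] at this
  have hherm : Sᵀ = S := by
    have := (CFC.sqrt_nonneg X).posSemidef.isHermitian
    rwa [Matrix.IsHermitian, Matrix.conjTranspose_eq_transpose_of_trivial] at this
  have key : Matrix.trace ((A * S)ᵀ * (A * S)) = Matrix.trace (Aᵀ * A * X) := by
    rw [Matrix.transpose_mul, hherm, ← hsq]
    rw [show S * Aᵀ * (A * S) = S * (Aᵀ * A * S) by simp only [Matrix.mul_assoc]]
    rw [Matrix.trace_mul_comm]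
    simp only [Matrix.mul_assoc]
  rw [← key]
  exact trace_transpose_mul_self_nonneg' _

lemma frob_norm_eq_sqrt_trace {m n : ℕ} (A : Matrix (Fin m) (Fin n) ℝ) :
    ‖A‖ = Real.sqrt (Matrix.trace (Aᵀ * A)) := by
  rw [Matrix.frobenius_norm_def, trace_transpose_mul_self', Real.sqrt_eq_rpow]
  congr 1
  refine Finset.sum_congr rfl fun i _ => Finset.sum_congr rfl fun j _ => ?_
  rw [show ((2 : ℝ) = ((2 : ℕ) : ℝ)) by norm_num, Real.rpow_natCast]
  simp [Real.norm_eq_abs, sq_abs]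

theorem no_predictor_collapse
    (n1 n2 : ℕ) (hn1 : 0 < n1) (hn2 : 0 < n2)
    (X' : Matrix (Fin n1) (Fin n1) ℝ) (hX' : X'.PosSemidef)
    (η : ℝ) (hη : 0 < η)
    (W : ℝ → Matrix (Fin n2) (Fin n1) ℝ)
    (hW : ∀ t : ℝ, 0 ≤ t →
      HasDerivAt W (-(W t * (X' + η • (1 : Matrix (Fin n1) (Fin n1) ℝ)))) t) :
    (∀ t : ℝ, 0 ≤ t →
        Real.sqrt (Matrix.trace ((W t)ᵀ * W t)) ≤
          Real.exp (-η * t) * Real.sqrt (Matrix.trace ((W 0)ᵀ * W 0)))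
      ∧ Filter.Tendsto W Filter.atTop (nhds 0) := by
  set W' : ℝ → Matrix (Fin n2) (Fin n1) ℝ :=
    fun t => -(W t * (X' + η • (1 : Matrix (Fin n1) (Fin n1) ℝ))) with hW'def
  set f : ℝ → ℝ := fun t => Matrix.trace ((W t)ᵀ * W t) with hfdef
  have hfnonneg : ∀ t, 0 ≤ f t := fun t => trace_transpose_mul_self_nonneg' _
  -- entrywise derivatives
  have hentry : ∀ t : ℝ, 0 ≤ t → ∀ i j,
      HasDerivAt (fun s => W s i j) (W' t i j) t := by
    intro t ht i j
    exact ((Matrix.entryLinearMap ℝ ℝ i j).toContinuousLinearMap.hasFDerivAt.comp_hasDerivAt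
      t (hW t ht))
  -- derivative of f
  have hf : ∀ t : ℝ, 0 ≤ t →
      HasDerivAt f (-2 * (Matrix.trace ((W t)ᵀ * W t * X') + η * f t)) t := by
    intro t ht
    have h1 : HasDerivAt (fun s => ∑ i, ∑ j, (W s i j) ^ 2)
        (∑ i, ∑ j, (2 * W t i j * W' t i j)) t := by
      apply HasDerivAt.fun_sum
      intro i _
      apply HasDerivAt.fun_sum
      intro j _
      have := (hentry t ht i j).fun_pow 2
      simpa [mul_comm, mul_assoc, mul_left_comm] using this
    have hfeq : f = fun s => ∑ i, ∑ j, (W s i j) ^ 2 := by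
      funext s; exact trace_transpose_mul_self' _
    rw [hfeq]
    convert h1 using 1
    have : ∑ i, ∑ j, (2 * W t i j * W' t i j)
        = 2 * ∑ i, ∑ j, W t i j * W' t i j := by
      rw [Finset.mul_sum]
      refine Finset.sum_congr rfl fun i _ => ?_
      rw [Finset.mul_sum]
      refine Finset.sum_congr rfl fun j _ => by ring
    rw [this, sum_mul_eq_trace']
    have : (W t)ᵀ * W' t = -((W t)ᵀ * W t * X' + η • ((W t)ᵀ * W t)) := by
      rw [hW'def]
      simp only [Matrix.mul_neg, Matrix.mul_add, Matrix.mul_smul, Matrix.mul_one,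
        Matrix.mul_assoc]
    rw [this, Matrix.trace_neg, Matrix.trace_add, Matrix.trace_smul]
    simp only [smul_eq_mul]
    rw [← trace_transpose_mul_self']
    ring
  -- the function g = exp(2ηt) f t is antitone on [0,∞)
  set g : ℝ → ℝ := fun t => Real.exp (2 * η * t) * f t with hgdef
  have hg : ∀ t : ℝ, 0 ≤ t →
      HasDerivAt g (Real.exp (2 * η * t) * (-2 * Matrix.trace ((W t)ᵀ * W t * X'))) t := by
    intro t ht
    have he : HasDerivAt (fun s => Real.exp (2 * η * s)) (Real.exp (2 * η * t) * (2 * η)) t := by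
      have := ((hasDerivAt_id t).const_mul (2 * η)).exp
      simpa [mul_comm] using this
    have := he.fun_mul (hf t ht)
    refine this.congr_deriv ?_
    ring
  have hanti : AntitoneOn g (Set.Ici (0 : ℝ)) := by
    apply antitoneOn_of_deriv_nonpos (convex_Ici 0)
    · intro x hx
      exact ((hg x hx).continuousAt).continuousWithinAt
    · intro x hx
      rw [interior_Ici] at hx
      exact ((hg x hx.le).differentiableAt).differentiableWithinAt
    · intro x hx
      rw [interior_Ici] at hx
      rw [(hg x (le_of_lt hx)).deriv]
      have h1 : 0 ≤ Matrix.trace ((W x)ᵀ * W x * X') := trace_psd_nonneg' _ _ hX'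
      have h2 : 0 < Real.exp (2 * η * x) := Real.exp_pos _
      nlinarith
  -- main inequality
  have hmain : ∀ t : ℝ, 0 ≤ t → f t ≤ Real.exp (-(2 * η) * t) * f 0 := by
    intro t ht
    have := hanti (Set.self_mem_Ici) (Set.mem_Ici.mpr ht) ht
    rw [hgdef] at this
    simp only [mul_zero, Real.exp_zero, one_mul] at this
    have h2 : 0 < Real.exp (2 * η * t) := Real.exp_pos _
    rw [neg_mul, Real.exp_neg]
    rw [← mul_le_mul_iff_right₀ h2]
    calc Real.exp (2 * η * t) * f t ≤ f 0 := this
      _ = Real.exp (2 * η * t) * ((Real.exp (2 * η * t))⁻¹ * f 0) := by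
          field_simp
  have part1 : ∀ t : ℝ, 0 ≤ t →
      Real.sqrt (Matrix.trace ((W t)ᵀ * W t)) ≤
        Real.exp (-η * t) * Real.sqrt (Matrix.trace ((W 0)ᵀ * W 0)) := by
    intro t ht
    have h := hmain t ht
    have : Real.sqrt (f t) ≤ Real.sqrt (Real.exp (-(2 * η) * t) * f 0) :=
      Real.sqrt_le_sqrt h
    refine this.trans_eq ?_
    rw [Real.sqrt_mul (Real.exp_nonneg _)]
    congr 1
    rw [show (-(2 * η) * t) = (-η * t) + (-η * t) by ring, Real.exp_add]
    exact Real.sqrt_mul_self (Real.exp_nonneg _)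
  refine ⟨part1, ?_⟩
  -- tendsto
  refine tendsto_zero_iff_norm_tendsto_zero.mpr ?_
  have hlim : Filter.Tendsto
      (fun t : ℝ => Real.exp (-η * t) * Real.sqrt (Matrix.trace ((W 0)ᵀ * W 0)))
      Filter.atTop (nhds 0) := by
    have h1 : Filter.Tendsto (fun t : ℝ => -η * t) Filter.atTop Filter.atBot :=
      (Filter.tendsto_id).const_mul_atTop_of_neg (neg_neg_iff_pos.mpr hη)
    have h2 := Real.tendsto_exp_atBot.comp h1
    have := h2.mul_const (Real.sqrt (Matrix.trace ((W 0)ᵀ * W 0)))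
    simpa using this
  apply squeeze_zero' (Filter.Eventually.of_forall fun t => norm_nonneg _) _ hlim
  filter_upwards [Filter.eventually_ge_atTop (0 : ℝ)] with t ht
  rw [frob_norm_eq_sqrt_trace]
  exact part1 t ht
end

section
/- Let n be a positive natural number, let α_p, σ, η be real constants, let τ : ℝ → ℝ, and let W_p, F : ℝ → Mat(n×n, ℝ) be differentiable matrix-valued functions satisfying for all t the symmetrized dynamics Ẇ_p(t) = −(α_p/2)(1+σ²)(W_p(t)F(t) + F(t)W_p(t)) + α_p τ(t) F(t) − η W_p(t) and Ḟ(t) = −(1+σ²)(W_p(t)²F(t) + F(t)W_p(t)²) + τ(t)(W_p(t)F(t) + F(t)W_p(t)) − 2η F(t). Then the commutator L(t) := F(t)W_p(t) − W_p(t)F(t) satisfies for all t the equation L̇(t) = −L(t)K(t) − K(t)L(t), where K(t) = (1+σ²)((α_p/2)F(t) + W_p(t)²) − τ(t)W_p(t) + (3/2)η I. -/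
/-!
STATEMENT 4: Derivation step of Theorem 3 (eigenspace alignment). Under the
symmetrized dynamics for the predictor W_p and the correlation matrix F, the
commutator L = F W_p − W_p F satisfies L̇ = −LK − KL with
K = (1+σ²)((α_p/2)F + W_p²) − τ W_p + (3/2)η I.
-/

open Matrix

attribute [local instance] Matrix.frobeniusNormedAddCommGroup Matrix.frobeniusNormedSpace
attribute [local instance] Matrix.frobeniusNormedRing Matrix.frobeniusNormedAlgebra

theorem commutator_dynamics
    (n : ℕ) (hn : 0 < n) (αp σ η : ℝ) (τ : ℝ → ℝ)
    (Wp F : ℝ → Matrix (Fin n) (Fin n) ℝ)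
    (hWp : ∀ t : ℝ, HasDerivAt Wp
      (-(αp / 2 * (1 + σ ^ 2)) • (Wp t * F t + F t * Wp t)
        + (αp * τ t) • F t - η • Wp t) t)
    (hF : ∀ t : ℝ, HasDerivAt F
      (-(1 + σ ^ 2) • (Wp t * Wp t * F t + F t * (Wp t * Wp t))
        + τ t • (Wp t * F t + F t * Wp t) - (2 * η) • F t) t)
    (K : ℝ → Matrix (Fin n) (Fin n) ℝ)
    (hK : ∀ t : ℝ, K t = (1 + σ ^ 2) • ((αp / 2) • F t + Wp t * Wp t)
        - τ t • Wp t + (3 / 2 * η) • (1 : Matrix (Fin n) (Fin n) ℝ)) :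
    ∀ t : ℝ, HasDerivAt (fun u => F u * Wp u - Wp u * F u)
      (-((F t * Wp t - Wp t * F t) * K t) - K t * (F t * Wp t - Wp t * F t)) t := by
  intro t
  have h1 := ((hF t).mul (hWp t)).sub ((hWp t).mul (hF t))
  convert h1 using 1
  · rfl
  · rfl
  · rfl
  · rfl
  rw [hK]
  simp only [smul_smul, smul_add, smul_sub, add_mul, mul_add, sub_mul, mul_sub,
    smul_mul_assoc, mul_smul_comm, neg_smul, neg_mul, mul_neg, one_mul, mul_one,
    neg_add, neg_sub, neg_neg, mul_assoc]
  module
end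

section
/- Let n be a positive natural number, λ₀ > 0, let K : ℝ → Mat(n×n, ℝ) be such that for all t ≥ 0 and all v ∈ ℝⁿ, vᵀK(t)v ≥ λ₀‖v‖², and let L : ℝ → Mat(n×n, ℝ) be differentiable satisfying L̇(t) = −L(t)K(t) − K(t)L(t) for all t ≥ 0, with K(t) symmetric for all t. Then ‖L(t)‖_F ≤ e^{−2λ₀ t}‖L(0)‖_F for all t ≥ 0, so L(t) → 0. -/
/-!
STATEMENT 5: Decay part of Theorem 3 (eigenspace alignment). If K(t) is
symmetric and uniformly positive definite (quadratic form ≥ λ₀‖v‖², with the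
Euclidean ‖v‖² written as v ⬝ᵥ v), then the commutator L evolving by
L̇ = −LK − KL satisfies ‖L(t)‖_F ≤ e^{−2λ₀ t}‖L(0)‖_F (Frobenius norm written
as √(tr(LᵀL))), so L(t) → 0.
-/

open Matrix

attribute [local instance] Matrix.frobeniusNormedAddCommGroup Matrix.frobeniusNormedSpace

theorem commutator_decay
    (n : ℕ) (hn : 0 < n) (lam : ℝ) (hlam : 0 < lam)
    (K L : ℝ → Matrix (Fin n) (Fin n) ℝ)
    (hKsymm : ∀ t : ℝ, (K t).IsSymm)
    (hK : ∀ t : ℝ, 0 ≤ t → ∀ v : Fin n → ℝ, lam * (v ⬝ᵥ v) ≤ v ⬝ᵥ (K t) *ᵥ v)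
    (hL : ∀ t : ℝ, 0 ≤ t → HasDerivAt L (-(L t * K t) - K t * L t) t) :
    (∀ t : ℝ, 0 ≤ t →
        Real.sqrt (Matrix.trace ((L t)ᵀ * L t)) ≤
          Real.exp (-2 * lam * t) * Real.sqrt (Matrix.trace ((L 0)ᵀ * L 0)))
      ∧ Filter.Tendsto L Filter.atTop (nhds 0) := by
  classical
  set f : ℝ → ℝ := fun t => ∑ i, ∑ j, L t i j * L t i j with hf_def
  set F' : ℝ → ℝ := fun t => ∑ i, ∑ j,
      ((-(L t * K t) - K t * L t) i j * L t i j + L t i j * (-(L t * K t) - K t * L t) i j)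
    with hF'_def
  -- trace = f
  have htr : ∀ t, Matrix.trace ((L t)ᵀ * L t) = f t := by
    intro t
    simp only [Matrix.trace, Matrix.mul_apply, Matrix.diag, Matrix.transpose_apply, hf_def]
    exact Finset.sum_comm
  have hfnn : ∀ t, 0 ≤ f t :=
    fun t => Finset.sum_nonneg fun i _ => Finset.sum_nonneg fun j _ => mul_self_nonneg _
  -- derivative of f
  have hf : ∀ t : ℝ, 0 ≤ t → HasDerivAt f (F' t) t := by
    intro t ht
    refine HasDerivAt.fun_sum fun i _ => HasDerivAt.fun_sum fun j _ => ?_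
    have hentry : HasDerivAt (fun s => L s i j) ((-(L t * K t) - K t * L t) i j) t :=
      (Matrix.entryLinearMap ℝ ℝ i j).toContinuousLinearMap.hasFDerivAt.comp_hasDerivAt t
        (hL t ht)
    exact hentry.mul hentry
  -- key inequality F' t ≤ -(4*lam) * f t
  have key : ∀ t : ℝ, 0 ≤ t → F' t ≤ -(4 * lam) * f t := by
    intro t ht
    have e0 : F' t = -2 * (∑ i, ∑ j, L t i j * (L t * K t) i j)
        - 2 * (∑ i, ∑ j, L t i j * (K t * L t) i j) := by
      simp only [hF'_def, Matrix.sub_apply, Matrix.neg_apply, Finset.mul_sum,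
        ← Finset.sum_sub_distrib]
      refine Finset.sum_congr rfl fun i _ => Finset.sum_congr rfl fun j _ => by ring
    have e1 : (∑ i, ∑ j, L t i j * (L t * K t) i j) = ∑ i, (L t i) ⬝ᵥ (K t) *ᵥ (L t i) := by
      refine Finset.sum_congr rfl fun i _ => ?_
      simp only [Matrix.mul_apply, dotProduct, Matrix.mulVec, Finset.mul_sum]
      refine Finset.sum_congr rfl fun j _ => Finset.sum_congr rfl fun k _ => ?_
      rw [(hKsymm t).apply j k]
      ring
    have e2 : (∑ i, ∑ j, L t i j * (K t * L t) i j)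
        = ∑ j, (fun k => L t k j) ⬝ᵥ (K t) *ᵥ (fun k => L t k j) := by
      rw [Finset.sum_comm]
      refine Finset.sum_congr rfl fun j _ => ?_
      simp only [Matrix.mul_apply, dotProduct, Matrix.mulVec, Finset.mul_sum]
    have hrow : lam * f t ≤ ∑ i, (L t i) ⬝ᵥ (K t) *ᵥ (L t i) := by
      have : ∑ i, lam * ((L t i) ⬝ᵥ (L t i)) ≤ ∑ i, (L t i) ⬝ᵥ (K t) *ᵥ (L t i) :=
        Finset.sum_le_sum fun i _ => hK t ht (L t i)
      calc lam * f t = ∑ i, lam * ((L t i) ⬝ᵥ (L t i)) := by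
            simp [hf_def, dotProduct, Finset.mul_sum]
        _ ≤ _ := this
    have hcol : lam * f t ≤ ∑ j, (fun k => L t k j) ⬝ᵥ (K t) *ᵥ (fun k => L t k j) := by
      have : ∑ j, lam * ((fun k => L t k j) ⬝ᵥ (fun k => L t k j))
          ≤ ∑ j, (fun k => L t k j) ⬝ᵥ (K t) *ᵥ (fun k => L t k j) :=
        Finset.sum_le_sum fun j _ => hK t ht _
      calc lam * f t = ∑ j, lam * ((fun k => L t k j) ⬝ᵥ (fun k => L t k j)) := by
            simp only [hf_def, dotProduct, Finset.mul_sum]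
            rw [Finset.sum_comm]
        _ ≤ _ := this
    rw [e0, e1, e2]
    nlinarith [hrow, hcol]
  -- exponential bound via monotonicity of g
  set g : ℝ → ℝ := fun t => Real.exp (4 * lam * t) * f t with hg_def
  have hg : ∀ t : ℝ, 0 ≤ t →
      HasDerivAt g (Real.exp (4*lam*t) * (4*lam) * f t + Real.exp (4*lam*t) * F' t) t := by
    intro t ht
    have h1 : HasDerivAt (fun s : ℝ => 4*lam*s) (4*lam) t := by
      simpa using (hasDerivAt_id t).const_mul (4*lam)
    have hexp : HasDerivAt (fun s => Real.exp (4*lam*s)) (Real.exp (4*lam*t) * (4*lam)) t :=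
      (Real.hasDerivAt_exp _).comp t h1
    exact hexp.mul (hf t ht)
  have hganti : AntitoneOn g (Set.Ici (0:ℝ)) := by
    apply antitoneOn_of_deriv_nonpos (convex_Ici 0)
    · exact fun t ht => (hg t ht).continuousAt.continuousWithinAt
    · intro t ht
      rw [interior_Ici] at ht
      exact (hg t ht.le).differentiableAt.differentiableWithinAt
    · intro t ht
      rw [interior_Ici] at ht
      rw [(hg t ht.le).deriv]
      have hk := key t ht.le
      have he := (Real.exp_pos (4*lam*t))
      nlinarith [hfnn t]
  have hmain : ∀ t : ℝ, 0 ≤ t → f t ≤ Real.exp (-(4*lam*t)) * f 0 := by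
    intro t ht
    have h1 : g t ≤ g 0 := hganti Set.self_mem_Ici (Set.mem_Ici.mpr ht) ht
    have h0 : g 0 = f 0 := by simp [hg_def]
    rw [h0] at h1
    calc f t = Real.exp (-(4*lam*t)) * (Real.exp (4*lam*t) * f t) := by
          rw [← mul_assoc, ← Real.exp_add]; simp
      _ ≤ Real.exp (-(4*lam*t)) * f 0 :=
          mul_le_mul_of_nonneg_left h1 (Real.exp_nonneg _)
  have hsq : ∀ t : ℝ, 0 ≤ t → Real.sqrt (f t) ≤ Real.exp (-2*lam*t) * Real.sqrt (f 0) := by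
    intro t ht
    have h2 : Real.sqrt (Real.exp (-(4*lam*t)) * f 0)
        = Real.exp (-2*lam*t) * Real.sqrt (f 0) := by
      rw [Real.sqrt_mul (Real.exp_nonneg _)]
      congr 1
      rw [show (-(4*lam*t)) = (-2*lam*t) + (-2*lam*t) by ring, Real.exp_add]
      exact Real.sqrt_mul_self (Real.exp_nonneg _)
    calc Real.sqrt (f t) ≤ Real.sqrt (Real.exp (-(4*lam*t)) * f 0) :=
          Real.sqrt_le_sqrt (hmain t ht)
      _ = _ := h2
  constructor
  · intro t ht
    rw [htr, htr]
    exact hsq t ht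
  · have hnorm : ∀ t : ℝ, ‖L t‖ = Real.sqrt (f t) := by
      intro t
      show ‖L t‖ = Real.sqrt (∑ i, ∑ j, L t i j * L t i j)
      rw [Matrix.frobenius_norm_def, Real.sqrt_eq_rpow]
      norm_num [Real.norm_eq_abs, sq_abs, show ∀ x:ℝ, x*x = x^2 from fun x => (sq x).symm]
    refine tendsto_zero_iff_norm_tendsto_zero.mpr ?_
    have hbound : ∀ᶠ t in Filter.atTop, ‖L t‖ ≤ Real.exp (-2*lam*t) * Real.sqrt (f 0) := by
      filter_upwards [Filter.eventually_ge_atTop (0:ℝ)] with t ht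
      rw [hnorm]
      exact hsq t ht
    have h1 : Filter.Tendsto (fun t : ℝ => -2*lam*t) Filter.atTop Filter.atBot := by
      have := (Filter.tendsto_const_mul_atBot_of_neg (show (-2*lam) < 0 by linarith)).mpr
        (Filter.tendsto_id (α := ℝ) (x := Filter.atTop))
      simpa [mul_assoc] using this
    have h2 := Real.tendsto_exp_atBot.comp h1
    have h3 : Filter.Tendsto (fun t : ℝ => Real.exp (-2*lam*t) * Real.sqrt (f 0))
        Filter.atTop (nhds 0) := by
      simpa [Function.comp] using h2.mul_const (Real.sqrt (f 0))
    exact squeeze_zero' (Filter.Eventually.of_forall fun t => norm_nonneg _) hbound h3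
end

section
/- Let α_p > 0, σ ≥ 0, η ≥ 0 be real constants, let τ : ℝ → ℝ be any function, and let p, s : ℝ → ℝ be differentiable functions satisfying for all t the decoupled eigenmode dynamics ṗ(t) = α_p s(t)(τ(t) − (1+σ²)p(t)) − η p(t) and ṡ(t) = 2 p(t) s(t)(τ(t) − (1+σ²)p(t)) − 2η s(t). Then for all t, s(t) − α_p⁻¹ p(t)² = e^{−2ηt}·(s(0) − α_p⁻¹ p(0)²). In particular, when η > 0 the trajectory approaches the invariant parabola s = α_p⁻¹ p². -/
/-!
STATEMENT 7: Exact integral of motion (Eqn. 13) of the decoupled per-eigenmode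
dynamics: s(t) − α_p⁻¹ p(t)² = e^{−2ηt}(s(0) − α_p⁻¹ p(0)²); in particular,
when η > 0 the trajectory approaches the invariant parabola s = α_p⁻¹ p².
-/

theorem decoupled_integral_of_motion
    (αp σ η : ℝ) (hαp : 0 < αp) (hσ : 0 ≤ σ) (hη : 0 ≤ η)
    (τ p s : ℝ → ℝ)
    (hp : ∀ t : ℝ, HasDerivAt p
      (αp * s t * (τ t - (1 + σ ^ 2) * p t) - η * p t) t)
    (hs : ∀ t : ℝ, HasDerivAt s
      (2 * p t * s t * (τ t - (1 + σ ^ 2) * p t) - 2 * η * s t) t) :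
    (∀ t : ℝ, s t - αp⁻¹ * p t ^ 2
        = Real.exp (-2 * η * t) * (s 0 - αp⁻¹ * p 0 ^ 2))
      ∧ (0 < η →
          Filter.Tendsto (fun t => s t - αp⁻¹ * p t ^ 2) Filter.atTop (nhds 0)) := by
  set g : ℝ → ℝ := fun t => (s t - αp⁻¹ * p t ^ 2) * Real.exp (2 * η * t) with hg
  have hg' : ∀ t : ℝ, HasDerivAt g 0 t := by
    intro t
    have h1 : HasDerivAt (fun t => s t - αp⁻¹ * p t ^ 2)
        ((2 * p t * s t * (τ t - (1 + σ ^ 2) * p t) - 2 * η * s t)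
          - αp⁻¹ * (2 * p t ^ 1 * (αp * s t * (τ t - (1 + σ ^ 2) * p t) - η * p t))) t :=
      (hs t).sub (((hp t).pow 2).const_mul αp⁻¹)
    have h2 : HasDerivAt (fun t : ℝ => Real.exp (2 * η * t))
        (Real.exp (2 * η * t) * (2 * η)) t := by
      have := (Real.hasDerivAt_exp (2 * η * t)).comp t
        ((hasDerivAt_id t).const_mul (2 * η))
      exact this.congr_deriv (by simp)
    have := h1.mul h2
    refine this.congr_deriv ?_
    linear_combination (-Real.exp (2 * η * t) * 2 * p t * s t * (τ t - (1 + σ ^ 2) * p t)) * (inv_mul_cancel₀ hαp.ne')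
  have hconst : ∀ t : ℝ, g t = g 0 := by
    intro t
    have : ∀ x : ℝ, deriv g x = 0 := fun x => (hg' x).deriv
    have hc := is_const_of_deriv_eq_zero (fun x => (hg' x).differentiableAt) this t 0
    exact hc
  have key : ∀ t : ℝ, s t - αp⁻¹ * p t ^ 2
      = Real.exp (-2 * η * t) * (s 0 - αp⁻¹ * p 0 ^ 2) := by
    intro t
    have h := hconst t
    have he : Real.exp (2 * η * t) ≠ 0 := Real.exp_ne_zero _
    simp only [hg] at h
    rw [mul_zero, Real.exp_zero, mul_one] at h
    rw [show (-2 * η * t) = -(2 * η * t) by ring, Real.exp_neg, ← h]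
    field_simp
  refine ⟨key, fun hηpos => ?_⟩
  have : Filter.Tendsto (fun t : ℝ => Real.exp (-2 * η * t) * (s 0 - αp⁻¹ * p 0 ^ 2))
      Filter.atTop (nhds (0 * (s 0 - αp⁻¹ * p 0 ^ 2))) := by
    apply Filter.Tendsto.mul_const
    have : Filter.Tendsto (fun t : ℝ => -2 * η * t) Filter.atTop Filter.atBot := by
      apply Filter.Tendsto.const_mul_atTop_of_neg (by linarith) Filter.tendsto_id
    exact Real.tendsto_exp_atBot.comp this
  rw [zero_mul] at this
  exact this.congr fun t => (key t).symm
end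

section
/- Let τ > 0, σ ≥ 0, and η be real with 0 < 4η(1+σ²) < τ², and define f(p) = p²(τ − (1+σ²)p) − η p, p₋ = (τ − √(τ² − 4η(1+σ²)))/(2(1+σ²)), and p₊ = (τ + √(τ² − 4η(1+σ²)))/(2(1+σ²)). Then the derivative of f satisfies f'(0) = −η < 0, f'(p₋) > 0, and f'(p₊) < 0. Consequently, for the scalar flow ṗ = f(p), the fixed points 0 and p₊ are linearly stable while p₋ is linearly unstable. -/
/-!
STATEMENT 9: Stability classification of the fixed points of the reduced
one-dimensional BYOL dynamics ṗ = f(p) = p²(τ − (1+σ²)p) − ηp: the derivative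
of f is negative at 0 and p₊ (linearly stable fixed points) and positive at p₋
(linearly unstable fixed point).
-/

theorem reduced_dynamics_stability
    (τ σ η : ℝ) (hτ : 0 < τ) (hσ : 0 ≤ σ)
    (hη : 0 < 4 * η * (1 + σ ^ 2)) (hlt : 4 * η * (1 + σ ^ 2) < τ ^ 2)
    (f : ℝ → ℝ)
    (hf : ∀ p : ℝ, f p = p ^ 2 * (τ - (1 + σ ^ 2) * p) - η * p)
    (pm pp : ℝ)
    (hpm : pm = (τ - Real.sqrt (τ ^ 2 - 4 * η * (1 + σ ^ 2))) / (2 * (1 + σ ^ 2)))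
    (hpp : pp = (τ + Real.sqrt (τ ^ 2 - 4 * η * (1 + σ ^ 2))) / (2 * (1 + σ ^ 2))) :
    deriv f 0 = -η ∧ deriv f 0 < 0 ∧ 0 < deriv f pm ∧ deriv f pp < 0 := by
  have ha : (0:ℝ) < 1 + σ ^ 2 := by positivity
  have hηpos : 0 < η := by nlinarith
  have hfe : f = fun p => p ^ 2 * (τ - (1 + σ ^ 2) * p) - η * p := funext hf
  have hderiv : ∀ p : ℝ, deriv f p = 2 * τ * p - 3 * (1 + σ ^ 2) * p ^ 2 - η := by
    intro p
    have h : HasDerivAt (fun p : ℝ => p ^ 2 * (τ - (1 + σ ^ 2) * p) - η * p)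
        (2 * τ * p - 3 * (1 + σ ^ 2) * p ^ 2 - η) p := by
      have h1 := ((hasDerivAt_pow 2 p).mul
        ((hasDerivAt_const p τ).sub ((hasDerivAt_const p (1 + σ ^ 2)).mul (hasDerivAt_id p)))).sub
        ((hasDerivAt_const p η).mul (hasDerivAt_id p))
      refine h1.congr_deriv ?_
      simp only [id, Pi.sub_apply, Pi.mul_apply]
      norm_num
      ring
    rw [hfe]
    exact h.deriv
  set s := Real.sqrt (τ ^ 2 - 4 * η * (1 + σ ^ 2)) with hs
  have hs2 : s ^ 2 = τ ^ 2 - 4 * η * (1 + σ ^ 2) := Real.sq_sqrt (by linarith)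
  have hspos : 0 < s := Real.sqrt_pos.2 (by linarith)
  have hslt : s < τ := by nlinarith
  have hpm' : pm * (2 * (1 + σ ^ 2)) = τ - s := by
    rw [hpm]; field_simp
  have hpp' : pp * (2 * (1 + σ ^ 2)) = τ + s := by
    rw [hpp]; field_simp
  refine ⟨?_, ?_, ?_, ?_⟩
  · rw [hderiv]; ring
  · rw [hderiv]; nlinarith
  · rw [hderiv]
    nlinarith [mul_pos hspos (sub_pos.2 hslt), sq_nonneg (pm * (2 * (1 + σ ^ 2))), hpm', hs2, mul_pos ha ha]
  · rw [hderiv]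
    nlinarith [mul_pos hspos (add_pos hspos hτ), hpp', hs2, mul_pos ha ha]
end

section
/- Let λ_s > 0, λ_d ≠ 0, α_p > 0, and β > 0 be real constants. Define G : ℝ³ → ℝ³ by G(w, w_p, w_a) = (w_p·(w_a λ_d − w_p w λ_s), α_p·(w_a λ_d − w_p w λ_s)·w, β·(w − w_a)). Then G(w, w_p, w_a) = (0,0,0) if and only if either (w = 0 and w_a = 0, with w_p arbitrary) or (w_a = w and w_p = λ_d/λ_s). -/
/-!
STATEMENT 17: Fixed points of the three-dimensional reduction of BYOL learning
dynamics: the vector field G(w, w_p, w_a) vanishes iff either (w = 0 ∧ w_a = 0,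
w_p arbitrary) or (w_a = w ∧ w_p = λ_d/λ_s).
-/

theorem byol_3d_fixed_points
    (lams lamd αp β : ℝ)
    (hlams : 0 < lams) (hlamd : lamd ≠ 0) (hαp : 0 < αp) (hβ : 0 < β)
    (G : ℝ → ℝ → ℝ → ℝ × ℝ × ℝ)
    (hG : ∀ w wp wa : ℝ, G w wp wa
      = (wp * (wa * lamd - wp * w * lams),
         αp * ((wa * lamd - wp * w * lams) * w),
         β * (w - wa))) :
    ∀ w wp wa : ℝ,
      G w wp wa = (0, 0, 0) ↔ (w = 0 ∧ wa = 0) ∨ (wa = w ∧ wp = lamd / lams) := by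
  intro w wp wa
  rw [hG, Prod.mk.injEq, Prod.mk.injEq]
  constructor
  · rintro ⟨h1, h2, h3⟩
    have hwa : wa = w := by
      have := mul_eq_zero.mp h3
      rcases this with h | h
      · exact absurd h (ne_of_gt hβ)
      · linarith
    subst hwa
    rcases eq_or_ne wa 0 with hw | hw
    · exact Or.inl ⟨hw, hw⟩
    · right
      refine ⟨rfl, ?_⟩
      have h2' : (wa * lamd - wp * wa * lams) * wa = 0 := by
        rcases mul_eq_zero.mp h2 with h | h
        · exact absurd h (ne_of_gt hαp)
        · exact h
      have h2'' : wa * lamd - wp * wa * lams = 0 := by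
        rcases mul_eq_zero.mp h2' with h | h
        · exact h
        · exact absurd h hw
      have : wa * (lamd - wp * lams) = 0 := by linarith [h2'', mul_sub wa lamd (wp*lams), mul_comm wp wa]
      have hl : lamd - wp * lams = 0 := by
        rcases mul_eq_zero.mp this with h | h
        · exact absurd h hw
        · exact h
      field_simp
      linarith
  · rintro (⟨hw, hwa⟩ | ⟨hwa, hwp⟩)
    · subst hw; subst hwa; refine ⟨by ring, by ring, by ring⟩
    · subst hwa; subst hwp
      have hs := ne_of_gt hlams
      refine ⟨?_, ?_, by ring⟩
      · field_simp; ring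
      · field_simp; ring
end

section
/- Let λ_s, λ_d, β be real constants and let w, w_p, w_a : [0, T] → ℝ be differentiable functions satisfying, for all t ∈ [0, T], ẇ(t) = w_p(t)·(w_a(t)λ_d − w_p(t)w(t)λ_s), ẇ_p(t) = (w_a(t)λ_d − w_p(t)w(t)λ_s)·w(t), and ẇ_a(t) = β(w(t) − w_a(t)). If w(0) = w_p(0) and the function t ↦ w_a(t)λ_d − w_p(t)w(t)λ_s is continuous on [0, T], then w(t) = w_p(t) for all t ∈ [0, T]. -/
/-!
STATEMENT 18: The diagonal {w = w_p} is an invariant submanifold of the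
three-dimensional reduced BYOL dynamics (with α_p = 1): if w(0) = w_p(0) and the
coefficient t ↦ w_a λ_d − w_p w λ_s is continuous on [0, T], then w ≡ w_p
on [0, T].
-/

theorem byol_3d_diagonal_invariant
    (T lams lamd β : ℝ) (hT : 0 ≤ T)
    (w wp wa : ℝ → ℝ)
    (hw : ∀ t ∈ Set.Icc (0:ℝ) T, HasDerivWithinAt w
      (wp t * (wa t * lamd - wp t * w t * lams)) (Set.Icc (0:ℝ) T) t)
    (hwp : ∀ t ∈ Set.Icc (0:ℝ) T, HasDerivWithinAt wp
      ((wa t * lamd - wp t * w t * lams) * w t) (Set.Icc (0:ℝ) T) t)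
    (hwa : ∀ t ∈ Set.Icc (0:ℝ) T, HasDerivWithinAt wa
      (β * (w t - wa t)) (Set.Icc (0:ℝ) T) t)
    (h0 : w 0 = wp 0)
    (hcont : ContinuousOn (fun t => wa t * lamd - wp t * w t * lams)
      (Set.Icc (0:ℝ) T)) :
    ∀ t ∈ Set.Icc (0:ℝ) T, w t = wp t := by
  set c : ℝ → ℝ := fun t => wa t * lamd - wp t * w t * lams with hc
  -- bound on |c| on compact Icc
  obtain ⟨K, hK⟩ : ∃ K, ∀ t ∈ Set.Icc (0:ℝ) T, |c t| ≤ K := by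
    have : IsCompact (Set.Icc (0:ℝ) T) := isCompact_Icc
    obtain ⟨K, hK⟩ := (this.image_of_continuousOn hcont.abs).bddAbove
    exact ⟨K, fun t ht => hK ⟨t, ht, rfl⟩⟩
  set u : ℝ → ℝ := fun t => w t - wp t with hu
  have hu' : ∀ t ∈ Set.Icc (0:ℝ) T,
      HasDerivWithinAt u (-(c t) * u t) (Set.Icc (0:ℝ) T) t := by
    intro t ht
    have : HasDerivWithinAt u (wp t * (wa t * lamd - wp t * w t * lams)
        - (wa t * lamd - wp t * w t * lams) * w t) (Set.Icc (0:ℝ) T) t :=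
      (hw t ht).sub (hwp t ht)
    convert this using 1
    simp only [hu, hc]
    ring
  have hucont : ContinuousOn u (Set.Icc (0:ℝ) T) := fun t ht =>
    (hu' t ht).continuousWithinAt
  have key : ∀ t ∈ Set.Icc (0:ℝ) T,
      ‖u t‖ ≤ gronwallBound 0 K 0 (t - 0) := by
    apply norm_le_gronwallBound_of_norm_deriv_right_le hucont
    · intro x hx
      have hmem : Set.Icc (0:ℝ) T ∈ nhdsWithin x (Set.Ici x) :=
        Icc_mem_nhdsGE_of_mem hx
      exact (hu' x (Set.mem_Icc_of_Ico hx)).mono_of_mem_nhdsWithin hmem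
    · simp [hu, h0]
    · intro x hx
      have h1 : |(-(c x)) * u x| = |c x| * |u x| := by
        rw [abs_mul, abs_neg]
      rw [Real.norm_eq_abs, h1, Real.norm_eq_abs, add_zero]
      exact mul_le_mul_of_nonneg_right (hK x (Set.mem_Icc_of_Ico hx)) (abs_nonneg _)
  intro t ht
  have := key t ht
  rw [gronwallBound_ε0, zero_mul] at this
  have : |u t| ≤ 0 := by simpa using this
  have h2 : u t = 0 := abs_eq_zero.mp (le_antisymm this (abs_nonneg _))
  simp only [hu] at h2
  linarith
end
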